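/- Let p(z,w) = z^m − w^n with m, n ≥ 1 and J = 𝕋. Identifying 𝕋 with ℝ/ℤ via z = e^{2πiα}, w = e^{2πiβ}, and letting d = gcd(m,n), the pair ([α],[β]) lies in G_r (i.e., there is a chain z₁,…,z_{r+1} ∈ 𝕋 with z₁ = e^{2πiα}, z_{r+1} = e^{2πiβ}, and z_k^m = z_{k+1}^n for each k) if and only if there exists an integer k with β ≡ (m^r/n^r)α + d^{r−1}k/n^r (mod ℤ). -/

import Mathlib

noncomputable def e (t : ℝ) : ℂ := Complex.exp (2 * Real.pi * Complex.I * (t : ℂ))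

lemma e_abs (t : ℝ) : ‖e t‖ = 1 := by
  have h : (2 * Real.pi * Complex.I * (t : ℂ)) = ((2 * Real.pi * t : ℝ) : ℂ) * Complex.I := by
    push_cast; ring
  rw [e, h, Complex.norm_exp_ofReal_mul_I]

lemma two_pi_I_ne : (2 * Real.pi * Complex.I : ℂ) ≠ 0 := by
  simp [Real.pi_ne_zero, Complex.I_ne_zero]

lemma e_eq_iff (t s : ℝ) : e t = e s ↔ ∃ j : ℤ, t = s + j := by
  rw [e, e, Complex.exp_eq_exp_iff_exists_int]
  constructor
  · rintro ⟨j, hj⟩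
    refine ⟨j, ?_⟩
    have h : (2 * Real.pi * Complex.I) * (t : ℂ) = (2 * Real.pi * Complex.I) * ((s : ℂ) + j) := by
      rw [hj]; ring
    have := mul_left_cancel₀ two_pi_I_ne h
    exact_mod_cast this
  · rintro ⟨j, hj⟩
    exact ⟨j, by rw [hj]; push_cast; ring⟩

lemma e_pow (t : ℝ) (k : ℕ) : (e t) ^ k = e (k * t) := by
  rw [e, e, ← Complex.exp_nat_mul]
  push_cast; ring_nf

lemma e_surj (z : ℂ) (hz : ‖z‖ = 1) : ∃ t : ℝ, z = e t := by
  refine ⟨z.arg / (2 * Real.pi), ?_⟩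
  have h := Complex.norm_mul_exp_arg_mul_I z
  rw [hz] at h
  push_cast at h
  rw [one_mul] at h
  have key : (2 * Real.pi * Complex.I * ((z.arg / (2 * Real.pi) : ℝ) : ℂ)) = z.arg * Complex.I := by
    have hpi : (Real.pi : ℂ) ≠ 0 := by exact_mod_cast Real.pi_ne_zero
    push_cast
    field_simp
  rw [e, key, h]



section arith

variable (m n : ℕ)

lemma m_eq : (m : ℤ) = (Nat.gcd m n : ℤ) * (m / Nat.gcd m n : ℕ) := by
  exact_mod_cast (Nat.mul_div_cancel' (Nat.gcd_dvd_left m n)).symm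

lemma n_eq : (n : ℤ) = (Nat.gcd m n : ℤ) * (n / Nat.gcd m n : ℕ) := by
  exact_mod_cast (Nat.mul_div_cancel' (Nat.gcd_dvd_right m n)).symm

lemma d_dvd_m : ((Nat.gcd m n : ℤ)) ∣ (m : ℤ) := ⟨_, m_eq m n⟩
lemma d_dvd_n : ((Nat.gcd m n : ℤ)) ∣ (n : ℤ) := ⟨_, n_eq m n⟩

lemma bezout (hm : 1 ≤ m) (s : ℕ) :
    ∃ A B : ℤ, A * ((m : ℤ) * (Nat.gcd m n : ℤ) ^ s) + B * (n : ℤ) ^ (s + 1)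
      = (Nat.gcd m n : ℤ) ^ (s + 1) := by
  set d := Nat.gcd m n with hd
  have hdpos : 0 < d := Nat.gcd_pos_of_pos_left n hm
  set m' := m / d
  set n' := n / d
  have hcop : Nat.Coprime m' n' := Nat.coprime_div_gcd_div_gcd hdpos
  have hcop2 : Nat.Coprime m' (n' ^ (s + 1)) := hcop.pow_right (s + 1)
  have hic : IsCoprime (m' : ℤ) ((n' : ℤ) ^ (s + 1)) := by
    have := Nat.isCoprime_iff_coprime.mpr hcop2
    push_cast at this
    exact this
  obtain ⟨A, B, hAB⟩ := hic
  refine ⟨A, B, ?_⟩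
  calc A * ((m : ℤ) * (d : ℤ) ^ s) + B * (n : ℤ) ^ (s + 1)
      = (A * m' + B * (n' : ℤ) ^ (s + 1)) * (d : ℤ) ^ (s + 1) := by
        rw [m_eq m n, n_eq m n, ← hd]; ring
    _ = (d : ℤ) ^ (s + 1) := by rw [hAB, one_mul]

lemma dvd_m_pow (r : ℕ) : ((Nat.gcd m n : ℤ)) ^ (r - 1) ∣ (m : ℤ) ^ r :=
  dvd_trans (pow_dvd_pow_of_dvd (d_dvd_m m n) (r - 1)) (pow_dvd_pow _ (Nat.sub_le r 1))

lemma dvd_n_pow (r : ℕ) : ((Nat.gcd m n : ℤ)) ^ (r - 1) ∣ (n : ℤ) ^ r :=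
  dvd_trans (pow_dvd_pow_of_dvd (d_dvd_n m n) (r - 1)) (pow_dvd_pow _ (Nat.sub_le r 1))

lemma dvd_md (s : ℕ) :
    ((Nat.gcd m n : ℤ)) ^ (s + 1) ∣ (m : ℤ) * (Nat.gcd m n : ℤ) ^ s :=
  ⟨(m / Nat.gcd m n : ℕ), by rw [m_eq m n]; ring⟩

end arith

def RChain (m n r : ℕ) (α β : ℝ) : Prop :=
  ∃ θ : ℕ → ℝ, θ 0 = α ∧ θ r = β ∧
    ∀ k < r, ∃ c : ℤ, (n : ℝ) * θ (k + 1) = (m : ℝ) * θ k + c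

lemma rchain_succ (m n r : ℕ) (α β : ℝ) :
    RChain m n (r + 1) α β ↔
      ∃ γ : ℝ, RChain m n r α γ ∧ ∃ c : ℤ, (n : ℝ) * β = (m : ℝ) * γ + c := by
  constructor
  · rintro ⟨θ, h0, hl, hs⟩
    refine ⟨θ r, ⟨θ, h0, rfl, fun k hk => hs k (by omega)⟩, ?_⟩
    have := hs r (by omega)
    rwa [hl] at this
  · rintro ⟨γ, ⟨θ, h0, hl, hs⟩, c, hc⟩
    refine ⟨fun k => if k ≤ r then θ k else β, by simpa using h0, by simp, ?_⟩
    intro k hk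
    rcases Nat.lt_or_ge k r with h | h
    · have h1 : k ≤ r := by omega
      have h2 : k + 1 ≤ r := by omega
      simpa [h1, h2] using hs k h
    · have hkr : k = r := by omega
      subst hkr
      refine ⟨c, ?_⟩
      show (n : ℝ) * (if k + 1 ≤ k then θ (k + 1) else β) =
        (m : ℝ) * (if k ≤ k then θ k else β) + c
      rw [if_neg (by omega), if_pos le_rfl, hl]
      exact hc

lemma rchain_iff (m n : ℕ) (hm : 1 ≤ m) (hn : 1 ≤ n) :
    ∀ r, 1 ≤ r → ∀ α β : ℝ, (RChain m n r α β ↔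
      ∃ c : ℤ, ((Nat.gcd m n : ℤ)) ^ (r - 1) ∣ c ∧
        (n : ℝ) ^ r * β = (m : ℝ) ^ r * α + (c : ℝ)) := by
  intro r hr
  induction r, hr using Nat.le_induction with
  | base =>
    intro α β
    constructor
    · rintro ⟨θ, h0, hl, hs⟩
      obtain ⟨c, hc⟩ := hs 0 (by omega)
      rw [h0, hl] at hc
      exact ⟨c, by simp, by simpa using hc⟩
    · rintro ⟨c, _, hc⟩
      refine ⟨fun k => if k = 0 then α else β, by simp, by simp, ?_⟩
      intro k hk
      have : k = 0 := by omega
      subst this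
      exact ⟨c, by simpa using hc⟩
  | succ r hr ih =>
    obtain ⟨s, rfl⟩ : ∃ s, r = s + 1 := ⟨r - 1, by omega⟩
    intro α β
    rw [rchain_succ]
    simp only [Nat.add_sub_cancel] at ih ⊢
    constructor
    · rintro ⟨γ, hch, c, hc⟩
      obtain ⟨c', hd', hc'⟩ := (ih α γ).mp hch
      refine ⟨(m : ℤ) * c' + (n : ℤ) ^ (s + 1) * c, ?_, ?_⟩
      · obtain ⟨t, ht⟩ := hd'
        have h1 : ((Nat.gcd m n : ℤ)) ^ (s + 1) ∣ (m : ℤ) * c' := by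
          rw [ht, ← mul_assoc]
          exact Dvd.dvd.mul_right (dvd_md m n s) t
        have h2 : ((Nat.gcd m n : ℤ)) ^ (s + 1) ∣ (n : ℤ) ^ (s + 1) * c :=
          Dvd.dvd.mul_right (pow_dvd_pow_of_dvd (d_dvd_n m n) (s + 1)) c
        exact dvd_add h1 h2
      · push_cast
        linear_combination (n : ℝ) ^ (s + 1) * hc + (m : ℝ) * hc'
    · rintro ⟨C, hdC, hC⟩
      obtain ⟨t, ht⟩ := hdC
      obtain ⟨A, B, hAB⟩ := bezout m n hm s
      set d : ℤ := (Nat.gcd m n : ℤ) with hdd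
      have hCC : C = (m : ℤ) * (A * t * d ^ s) + (n : ℤ) ^ (s + 1) * (B * t) := by
        rw [ht, ← hAB]
        ring
      set c' : ℤ := A * t * d ^ s with hc'd
      set c : ℤ := B * t
      have hn0 : (n : ℝ) ≠ 0 := by positivity
      have hnr : (n : ℝ) ^ (s + 1) ≠ 0 := by positivity
      set γ : ℝ := ((m : ℝ) ^ (s + 1) * α + (c' : ℝ)) / (n : ℝ) ^ (s + 1) with hγ
      have h1 : (n : ℝ) ^ (s + 1) * γ = (m : ℝ) ^ (s + 1) * α + (c' : ℝ) := by
        rw [hγ]; field_simp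
      have hdvdc' : d ^ s ∣ c' := ⟨A * t, by rw [hc'd]; ring⟩
      refine ⟨γ, (ih α γ).mpr ⟨c', hdvdc', h1⟩, c, ?_⟩
      have key : (n : ℝ) ^ (s + 1) * ((n : ℝ) * β) =
          (n : ℝ) ^ (s + 1) * ((m : ℝ) * γ + (c : ℝ)) := by
        have hCr2 : (C : ℝ) = (m : ℝ) * (c' : ℝ) + (n : ℝ) ^ (s + 1) * (c : ℝ) := by
          rw [hCC]; push_cast; ring
        push_cast at hC ⊢
        linear_combination hC - (m : ℝ) * h1 + hCr2
      exact mul_left_cancel₀ hnr key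




/-- A chain (path) of length `r` for the correspondence `z^m = w^n` on the unit
circle: points `z 0, …, z r ∈ 𝕋` with `(z k)^m = (z (k+1))^n` for each `k`. -/
def IsChainT (m n r : ℕ) (z : Fin (r + 1) → ℂ) : Prop :=
  (∀ k, ‖z k‖ = 1) ∧ ∀ k : Fin r, z k.castSucc ^ m = z k.succ ^ n

/-- for `p(z,w) = z^m - w^n` on `𝕋 ≅ ℝ/ℤ` and `d = gcd(m,n)`,
`([α],[β]) ∈ G_r` (there is a length-`r` chain from `e^{2πiα}` to `e^{2πiβ}`)
iff `β ≡ (m^r/n^r) α + d^{r-1} k / n^r (mod ℤ)` for some integer `k`. -/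
theorem stmt_5 (m n r : ℕ) (hm : 1 ≤ m) (hn : 1 ≤ n) (hr : 1 ≤ r) (α β : ℝ) :
    (∃ z : Fin (r + 1) → ℂ, IsChainT m n r z ∧
        z 0 = Complex.exp (2 * Real.pi * Complex.I * (α : ℂ)) ∧
        z (Fin.last r) = Complex.exp (2 * Real.pi * Complex.I * (β : ℂ))) ↔
      ∃ k j : ℤ, β = ((m : ℝ) ^ r / (n : ℝ) ^ r) * α +
        ((Nat.gcd m n : ℝ)) ^ (r - 1) * (k : ℝ) / (n : ℝ) ^ r + (j : ℝ) := by
  have hn0 : (n : ℝ) ≠ 0 := by positivity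
  have hnr : (n : ℝ) ^ r ≠ 0 := by positivity
  constructor
  · rintro ⟨z, ⟨habs, hch⟩, h0, hl⟩
    choose t ht using fun k => e_surj (z k) (habs k)
    set θ : ℕ → ℝ := fun k => if h : k < r + 1 then t ⟨k, h⟩ else 0 with hθ
    have hθk : ∀ (k : ℕ) (h : k < r + 1), θ k = t ⟨k, h⟩ := by
      intro k h; simp only [hθ, dif_pos h]
    have hchain : RChain m n r (θ 0) (θ r) := by
      refine ⟨θ, rfl, rfl, ?_⟩
      intro k hk
      have h1 : k < r + 1 := by omega
      have h2 : k + 1 < r + 1 := by omega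
      have := hch ⟨k, hk⟩
      have e1 : z (Fin.castSucc ⟨k, hk⟩) = e (θ k) := by
        rw [hθk k h1]; exact ht _
      have e2 : z (Fin.succ ⟨k, hk⟩) = e (θ (k + 1)) := by
        rw [hθk (k+1) h2]; exact ht _
      rw [e1, e2, e_pow, e_pow] at this
      obtain ⟨j, hj⟩ := (e_eq_iff _ _).mp this
      exact ⟨-j, by push_cast; linarith⟩
    obtain ⟨c, hdvd, heq⟩ := (rchain_iff m n hm hn r hr _ _).mp hchain
    have h0' : e (θ 0) = e α := by
      rw [hθk 0 (by omega)]
      rw [← ht _]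
      convert h0 using 2 <;> simp [e, Fin.ext_iff]
    have hl' : e (θ r) = e β := by
      rw [hθk r (by omega)]
      rw [← ht _]
      convert hl using 2 <;> simp [e, Fin.ext_iff]
    obtain ⟨j0, hj0⟩ := (e_eq_iff _ _).mp h0'
    obtain ⟨j1, hj1⟩ := (e_eq_iff _ _).mp hl'
    have hdvd2 : ((Nat.gcd m n : ℤ)) ^ (r - 1) ∣ (c + (m:ℤ)^r * j0 - (n:ℤ)^r * j1) :=
      dvd_sub (dvd_add hdvd ((dvd_m_pow m n r).mul_right j0)) ((dvd_n_pow m n r).mul_right j1)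
    obtain ⟨k, hk⟩ := hdvd2
    refine ⟨k, 0, ?_⟩
    have hkr : ((Nat.gcd m n : ℝ)) ^ (r - 1) * (k : ℝ) = (c : ℝ) + (m:ℝ)^r * (j0 : ℝ) - (n:ℝ)^r * (j1 : ℝ) := by
      exact_mod_cast congrArg (fun x : ℤ => (x : ℝ)) hk.symm
    rw [hj0, hj1] at heq
    field_simp
    linear_combination heq - hkr
  · rintro ⟨k, j, hβ⟩
    set c : ℤ := (Nat.gcd m n : ℤ) ^ (r - 1) * k + (n : ℤ) ^ r * j with hc
    have hdvd : ((Nat.gcd m n : ℤ)) ^ (r - 1) ∣ c :=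
      dvd_add (Dvd.intro _ rfl) ((dvd_n_pow m n r).mul_right j)
    have heq : (n : ℝ) ^ r * β = (m : ℝ) ^ r * α + (c : ℝ) := by
      rw [hβ, hc]
      push_cast
      field_simp
      ring
    obtain ⟨θ, hθ0, hθr, hstep⟩ := (rchain_iff m n hm hn r hr α β).mpr ⟨c, hdvd, heq⟩
    refine ⟨fun i => e (θ i), ⟨fun i => e_abs _, ?_⟩, ?_, ?_⟩
    · intro i
      obtain ⟨ci, hci⟩ := hstep i i.isLt
      rw [e_pow, e_pow]
      simp only [Fin.coe_castSucc, Fin.val_succ]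
      refine (e_eq_iff _ _).mpr ⟨-ci, ?_⟩
      push_cast
      linarith
    · show e (θ ((0 : Fin (r+1)) : ℕ)) = _
      rw [Fin.val_zero, hθ0]; rfl
    · show e (θ ((Fin.last r : Fin (r+1)) : ℕ)) = _
      rw [Fin.val_last, hθr]; rfl
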